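/- For the three-operator splitting operator with convex-graph middle operator: if A, B are maximally monotone on H with graph(B) convex, C_ξ is τ-cocoercive for almost every ξ with C = E[C_ξ], ρ > 0, T_ξ = I − J_{ρA} + J_{ρB}∘(2J_{ρA} − I − ρ C_ξ ∘ J_{ρA}), and T = E[T_ξ], then J_{ρA}(Fix(T)) = Zer(A + B + C). -/

import Mathlib

open MeasureTheory Filter Topology
open scoped RealInnerProductSpace ENNReal BigOperators

/-- For the stochastic three-operator splitting operator
`T_ξ = I − J_{ρA} + J_{ρB}∘(2J_{ρA} − I − ρ C_ξ ∘ J_{ρA})` with `A, B`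
maximally monotone (encoded via their resolvents), `graph(B)` convex (so that
expectations of integrable selections remain in the graph), and `C_ξ`
`τ`-cocoercive with `C = E[C_ξ]`, one has `J_{ρA}(Fix T) = Zer(A + B + C)`
where `T = E[T_ξ]`. -/
theorem stmt17_tos_fixed_points_are_zeros
    {H : Type*} [NormedAddCommGroup H] [InnerProductSpace ℝ H] [CompleteSpace H]
    {I : Type*} [MeasurableSpace I] (ν : Measure I) [IsProbabilityMeasure ν]
    (A B : H → Set H) (JA JB : H → H) (Cξ : I → H → H) (C : H → H) (T : H → H)
    (ρ τ : ℝ) (hτ : 0 < τ) (hρ : ρ ∈ Set.Ioo (0:ℝ) (2 * τ))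
    -- resolvent characterizations (encoding maximal monotonicity of A and B)
    (hJA : ∀ x y : H, JA x = y ↔ ρ⁻¹ • (x - y) ∈ A y)
    (hJB : ∀ x y : H, JB x = y ↔ ρ⁻¹ • (x - y) ∈ B y)
    -- monotonicity of A and B
    (hAmono : ∀ x y u v : H, u ∈ A x → v ∈ A y → 0 ≤ ⟪u - v, x - y⟫)
    (hBmono : ∀ x y u v : H, u ∈ B x → v ∈ B y → 0 ≤ ⟪u - v, x - y⟫)
    -- graph(B) is convex, so expectations of integrable selections stay in it
    (hBgraph : Convex ℝ {p : H × H | p.2 ∈ B p.1})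
    (hBgraphExp : ∀ (W U : I → H), Integrable W ν → Integrable U ν →
      (∀ᵐ i ∂ν, U i ∈ B (W i)) → (∫ i, U i ∂ν) ∈ B (∫ i, W i ∂ν))
    -- the cocoercive operators and their expectation
    (hcoco : ∀ᵐ i ∂ν, ∀ x y : H,
      τ * ‖Cξ i x - Cξ i y‖ ^ 2 ≤ ⟪Cξ i x - Cξ i y, x - y⟫)
    (hCint : ∀ x : H, Integrable (fun i => Cξ i x) ν)
    (hC : ∀ x : H, C x = ∫ i, Cξ i x ∂ν)
    -- the splitting operators and their expectation
    (hTint : ∀ x : H,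
      Integrable (fun i => x - JA x + JB (2 • JA x - x - ρ • Cξ i (JA x))) ν)
    (hT : ∀ x : H,
      T x = ∫ i, (x - JA x + JB (2 • JA x - x - ρ • Cξ i (JA x))) ∂ν) :
    JA '' {x : H | T x = x}
      = {z : H | ∃ a ∈ A z, ∃ b ∈ B z, a + b + C z = 0} := by
  have hρ0 : (0:ℝ) < ρ := hρ.1
  have hρne : ρ ≠ 0 := ne_of_gt hρ0
  ext z
  simp only [Set.mem_image, Set.mem_setOf_eq]
  constructor
  · rintro ⟨x, hx, rfl⟩
    have ha : ρ⁻¹ • (x - JA x) ∈ A (JA x) := (hJA x (JA x)).mp rfl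
    set y : I → H := fun i => 2 • JA x - x - ρ • Cξ i (JA x) with hy
    set W : I → H := fun i => JB (y i) with hW
    have hWint : Integrable W ν := by
      have h1 : Integrable (fun i => (x - JA x + W i) - (x - JA x)) ν :=
        (hTint x).sub (integrable_const _)
      simpa using h1
    have hyint : Integrable y ν :=
      (integrable_const (2 • JA x - x)).sub ((hCint (JA x)).smul ρ)
    set U : I → H := fun i => ρ⁻¹ • (y i - W i) with hU
    have hUint : Integrable U ν := ((hyint.sub hWint).smul ρ⁻¹)
    have hUB : ∀ i, U i ∈ B (W i) := fun i => (hJB (y i) (W i)).mp rfl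
    have hWz : (∫ i, W i ∂ν) = JA x := by
      have h1 := (hT x).symm.trans hx
      rw [integral_add (integrable_const _) hWint, integral_const] at h1
      simp only [measure_univ, probReal_univ, ENNReal.toReal_one, one_smul] at h1
      have := h1
      -- h1 : x - JA x + ∫ W = x
      have h2 : x - JA x + (∫ i, W i ∂ν) = x := h1
      linear_combination (norm := abel) h2
    have hyv : (∫ i, y i ∂ν) = 2 • JA x - x - ρ • C (JA x) := by
      have h1 : (∫ i, y i ∂ν)
          = (∫ _ : I, (2 • JA x - x : H) ∂ν) - ∫ i, ρ • Cξ i (JA x) ∂ν :=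
        integral_sub (integrable_const _) ((hCint (JA x)).smul ρ)
      rw [h1, integral_const, integral_smul, ← hC]
      simp [measure_univ]
    have hBmem : (∫ i, U i ∂ν) ∈ B (JA x) := by
      rw [← hWz]; exact hBgraphExp W U hWint hUint (ae_of_all _ hUB)
    have hUval : (∫ i, U i ∂ν) = ρ⁻¹ • (JA x - x - ρ • C (JA x)) := by
      rw [show (fun i => U i) = fun i => ρ⁻¹ • (y i - W i) from rfl, integral_smul,
        integral_sub hyint hWint, hyv, hWz]
      congr 1
      abel
    refine ⟨ρ⁻¹ • (x - JA x), ha, ∫ i, U i ∂ν, hBmem, ?_⟩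
    rw [hUval]
    simp only [smul_sub, smul_smul, inv_mul_cancel₀ hρne, one_smul]
    abel
  · rintro ⟨a, ha, b, hb, hab⟩
    set x := z + ρ • a with hxdef
    have hJ : JA x = z := by
      rw [hJA]
      have h1 : ρ⁻¹ • (x - z) = a := by
        rw [hxdef, add_sub_cancel_left, smul_smul, inv_mul_cancel₀ hρne, one_smul]
      rw [h1]; exact ha
    have hbval : b = -a - C z := by linear_combination (norm := abel) hab
    set y : I → H := fun i => 2 • z - x - ρ • Cξ i z with hy
    set w : I → H := fun i => JB (y i) with hw
    have hwint : Integrable w ν := by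
      have h1 := hTint x
      simp only [hJ] at h1
      have h2 : Integrable (fun i => (x - z + w i) - (x - z)) ν :=
        h1.sub (integrable_const _)
      simpa using h2
    have hyint : Integrable y ν :=
      (integrable_const (2 • z - x)).sub ((hCint z).smul ρ)
    set u : I → H := fun i => ρ⁻¹ • (y i - w i) with hu
    have huint : Integrable u ν := ((hyint.sub hwint).smul ρ⁻¹)
    have huB : ∀ i, u i ∈ B (w i) := fun i => (hJB (y i) (w i)).mp rfl
    have hub : (∫ i, u i ∂ν) ∈ B (∫ i, w i ∂ν) :=
      hBgraphExp w u hwint huint (ae_of_all _ huB)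
    have hyv : (∫ i, y i ∂ν) = z + ρ • b := by
      have h1 : (∫ i, y i ∂ν)
          = (∫ _ : I, (2 • z - x : H) ∂ν) - ∫ i, ρ • Cξ i z ∂ν :=
        integral_sub (integrable_const _) ((hCint z).smul ρ)
      rw [h1, integral_const, integral_smul, ← hC]
      simp only [measure_univ, probReal_univ, ENNReal.toReal_one, one_smul]
      rw [hbval, hxdef, two_smul, smul_sub, smul_neg]
      abel
    have hwy : ∀ i, w i = y i - ρ • u i := by
      intro i
      show w i = y i - ρ • (ρ⁻¹ • (y i - w i))
      rw [smul_smul, mul_inv_cancel₀ hρne, one_smul]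
      abel
    have hstep : (∫ i, (y i - ρ • u i) ∂ν) = (∫ i, y i ∂ν) - ρ • ∫ i, u i ∂ν := by
      have h1 : (∫ i, (y i - ρ • u i) ∂ν)
          = (∫ i, y i ∂ν) - ∫ i, ρ • u i ∂ν :=
        integral_sub hyint (huint.smul ρ)
      rw [h1, integral_smul]
    have hwv : (∫ i, w i ∂ν) = (∫ i, y i ∂ν) - ρ • ∫ i, u i ∂ν :=
      (integral_congr_ae (ae_of_all _ hwy)).trans hstep
    set ub := ∫ i, u i ∂ν with hubdef
    have hdiff : (∫ i, w i ∂ν) - z = ρ • (b - ub) := by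
      rw [hwv, hyv, smul_sub]
      abel
    have hubb : ub = b := by
      have hm := hBmono _ _ _ _ hub hb
      rw [hdiff] at hm
      have h2 : ⟪ub - b, ρ • (b - ub)⟫ = -(ρ * ‖ub - b‖ ^ 2) := by
        rw [real_inner_smul_right, show b - ub = -(ub - b) by abel, inner_neg_right,
          real_inner_self_eq_norm_sq]
        ring
      rw [h2] at hm
      have h3 : ‖ub - b‖ ^ 2 ≤ 0 := by nlinarith [sq_nonneg ‖ub - b‖]
      have h4 : ub - b = 0 := by
        have := norm_eq_zero.mp (by nlinarith [norm_nonneg (ub - b), sq_nonneg ‖ub - b‖] : ‖ub - b‖ = 0)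
        exact this
      linear_combination (norm := abel) h4
    have hwz : (∫ i, w i ∂ν) = z := by
      have := hdiff
      rw [hubb] at this
      simp only [sub_self, smul_zero] at this
      linear_combination (norm := abel) this
    refine ⟨x, ?_, hJ⟩
    rw [hT x]
    simp only [hJ]
    rw [integral_add (integrable_const _) hwint, integral_const]
    simp only [measure_univ, probReal_univ, ENNReal.toReal_one, one_smul]
    rw [show (∫ i, JB (2 • z - x - ρ • Cξ i z) ∂ν) = ∫ i, w i ∂ν from rfl, hwz]
    abel
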